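/- Conversely, if two words u, v ∈ Σ* have equal projections onto Σ_p for every process p ∈ P, then u ∼_I v (Projection Lemma for Mazurkiewicz traces, for the independence relation induced by a distributed alphabet). -/

import Mathlib

/-- Trace equivalence: the congruence on `Act*` generated by swapping
adjacent letters with disjoint domains. -/
inductive TraceEq {Act P : Type} (dom : Act → Finset P) : List Act → List Act → Prop
  | refl (u : List Act) : TraceEq dom u u
  | symm {u v : List Act} : TraceEq dom u v → TraceEq dom v u
  | trans {u v w : List Act} : TraceEq dom u v → TraceEq dom v w → TraceEq dom u w
  | swap (u v : List Act) (a b : Act) (h : Disjoint (dom a) (dom b)) :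
      TraceEq dom (u ++ a :: b :: v) (u ++ b :: a :: v)

lemma TraceEq.cons_congr {Act P : Type} {dom : Act → Finset P} {u v : List Act} (c : Act)
    (h : TraceEq dom u v) : TraceEq dom (c :: u) (c :: v) := by
  induction h with
  | refl u => exact TraceEq.refl _
  | symm _ ih => exact ih.symm
  | trans _ _ ih1 ih2 => exact ih1.trans ih2
  | swap u v a b hd => exact TraceEq.swap (c :: u) v a b hd

lemma TraceEq.bubble {Act P : Type} {dom : Act → Finset P} (a : Act) (w t : List Act)
    (hd : ∀ b ∈ w, Disjoint (dom a) (dom b)) :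
    TraceEq dom (a :: (w ++ t)) (w ++ a :: t) := by
  induction w with
  | nil => exact TraceEq.refl _
  | cons c w ih =>
    refine TraceEq.trans (TraceEq.swap [] (w ++ t) a c (hd c (List.mem_cons_self))) ?_
    exact TraceEq.cons_congr c (ih fun b hb => hd b (List.mem_cons_of_mem _ hb))

lemma first_occ {Act : Type} {a : Act} {v : List Act} (h : a ∈ v) :
    ∃ v1 v2, v = v1 ++ a :: v2 ∧ a ∉ v1 := by
  classical
  induction v with
  | nil => cases h
  | cons b v ih =>
    by_cases hba : b = a
    · exact ⟨[], v, by simp [hba], by simp⟩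
    · rcases ih (by rcases List.mem_cons.mp h with h | h; exact absurd h.symm hba; exact h) with
        ⟨v1, v2, rfl, hna⟩
      exact ⟨b :: v1, v2, rfl, by simp [hna, Ne.symm hba]⟩


/-- Projection Lemma: over a distributed alphabet (finitely many processes,
nonempty domains), two words with equal projections onto every process
alphabet `Σ_p` are trace equivalent. -/
theorem stmt7 {Act P : Type} [Fintype P] [DecidableEq P] (dom : Act → Finset P)
    (hne : ∀ a, (dom a).Nonempty) (u v : List Act)
    (h : ∀ p : P, u.filter (fun a => decide (p ∈ dom a)) =
      v.filter (fun a => decide (p ∈ dom a))) :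
    TraceEq dom u v := by
  classical
  induction u generalizing v with
  | nil =>
    cases v with
    | nil => exact TraceEq.refl _
    | cons b v' =>
      obtain ⟨p, hp⟩ := hne b
      have := h p
      simp [hp] at this
  | cons a u' ih =>
    obtain ⟨p, hp⟩ := hne a
    have hpv : v.filter (fun x => decide (p ∈ dom x)) = a :: u'.filter (fun x => decide (p ∈ dom x)) := by
      have := (h p).symm
      simpa [hp] using this
    have hav : a ∈ v := by
      have : a ∈ v.filter (fun x => decide (p ∈ dom x)) := by rw [hpv]; exact List.mem_cons_self
      exact List.mem_of_mem_filter this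
    obtain ⟨v1, v2, rfl, hna⟩ := first_occ hav
    -- every letter of v1 is independent of a
    have hdisj : ∀ b ∈ v1, Disjoint (dom a) (dom b) := by
      intro b hb
      rw [Finset.disjoint_left]
      intro q hqa hqb
      by_contra
      have hq := h q
      have hfilt : b ∈ v1.filter (fun x => decide (q ∈ dom x)) :=
        List.mem_filter.mpr ⟨hb, by simpa using hqb⟩
      obtain ⟨c, rest, hc⟩ := List.exists_cons_of_ne_nil (List.ne_nil_of_mem hfilt)
      have hqv : (v1 ++ a :: v2).filter (fun x => decide (q ∈ dom x))
          = c :: (rest ++ a :: v2.filter (fun x => decide (q ∈ dom x))) := by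
        simp [List.filter_append, hc, hqa]
      have hqu : ((a :: u').filter (fun x => decide (q ∈ dom x)))
          = a :: u'.filter (fun x => decide (q ∈ dom x)) := by simp [hqa]
      have hca : c = a := by
        have := hq.symm.trans hqu
        rw [hqv] at this
        exact (List.cons.injEq .. ▸ this).1.symm ▸ rfl
      have hcv : c ∈ v1.filter (fun x => decide (q ∈ dom x)) := by
        rw [hc]; exact List.mem_cons_self
      have : c ∈ v1 := List.mem_of_mem_filter hcv
      exact hna (hca ▸ this)
    have key : TraceEq dom (a :: (v1 ++ v2)) (v1 ++ a :: v2) := TraceEq.bubble a v1 v2 hdisj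
    have hproj : ∀ q : P, u'.filter (fun x => decide (q ∈ dom x)) =
        (v1 ++ v2).filter (fun x => decide (q ∈ dom x)) := by
      intro q
      by_cases hq : q ∈ dom a
      · have hv1 : v1.filter (fun x => decide (q ∈ dom x)) = [] := by
          rw [List.filter_eq_nil_iff]
          intro b hb
          have := Finset.disjoint_left.mp (hdisj b hb) hq
          simpa using this
        have := h q
        rw [List.filter_append, hv1] at this
        simp only [List.filter_cons, hq, decide_true, if_true] at this
        simp only [List.filter_append, hv1, List.nil_append]
        simp only [List.nil_append] at this
        exact List.cons_injective this
      · have := h q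
        simp only [List.filter_cons, hq, decide_false, if_false, List.filter_append] at this ⊢
        simpa using this
    exact (TraceEq.cons_congr a (ih _ hproj)).trans key
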